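/- Assume k has characteristic l and that the action of γ on X is free (γ(x) ≠ x for all x ∈ X). Then both Tate cohomology groups of the γ-action on C_c^∞(X, k) vanish: every γ-invariant f ∈ C_c^∞(X, k) is of the form N(g) for some g ∈ C_c^∞(X, k), and every f ∈ C_c^∞(X, k) with N(f) = 0 is of the form g − γ·g for some g ∈ C_c^∞(X, k). -/

import Mathlib

open Finset Function Set

lemma exists_clopen_compact {X : Type*} [TopologicalSpace X] [LocallyCompactSpace X] [T2Space X]
    [TotallyDisconnectedSpace X]
    {x : X} {U : Set X} (hU : IsOpen U) (hx : x ∈ U) :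
    ∃ V : Set X, IsClopen V ∧ IsCompact V ∧ x ∈ V ∧ V ⊆ U := by
  obtain ⟨s, scomp, xs, sU⟩ := exists_compact_subset hU hx
  obtain ⟨V, hV, hxV, hVs⟩ := loc_compact_Haus_tot_disc_of_zero_dim.mem_nhds_iff.1
    (isOpen_interior.mem_nhds xs)
  exact ⟨V, hV, scomp.of_isClosed_subset hV.1 (hVs.trans interior_subset), hxV,
    hVs.trans (interior_subset.trans sU)⟩

lemma isLocallyConstant_indicator {X k : Type*} [TopologicalSpace X] [Zero k] [One k]
    {U : Set X} [DecidablePred (· ∈ U)] (hU : IsClopen U) :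
    IsLocallyConstant (fun x => if x ∈ U then (1 : k) else 0) := by
  intro s
  by_cases h1 : (1 : k) ∈ s <;> by_cases h0 : (0 : k) ∈ s
  · convert isOpen_univ
    ext x; by_cases hx : x ∈ U <;> simp [hx, h1, h0]
  · convert hU.2
    ext x; by_cases hx : x ∈ U <;> simp [hx, h1, h0]
  · convert hU.compl.2
    ext x; by_cases hx : x ∈ U <;> simp [hx, h1, h0]
  · convert isOpen_empty
    ext x; by_cases hx : x ∈ U <;> simp [hx, h1, h0]

lemma isLocallyConstant_finsetSum {X k ι : Type*} [TopologicalSpace X] [AddCommMonoid k]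
    (s : Finset ι) (F : ι → X → k) (h : ∀ i ∈ s, IsLocallyConstant (F i)) :
    IsLocallyConstant (fun x => ∑ i ∈ s, F i x) := by
  classical
  induction s using Finset.induction_on with
  | empty => simp only [Finset.sum_empty]; exact IsLocallyConstant.const (0 : k)
  | @insert a s ha ih =>
    simp only [Finset.sum_insert ha]
    exact (h a (Finset.mem_insert_self a s)).add
      (ih fun i hi => h i (Finset.mem_insert_of_mem hi))

lemma orbit_sum_shift {X k : Type*} [AddCommMonoid k] (σ : X → X) {l : ℕ} (hl0 : 0 < l)
    (hσl : ∀ x, σ^[l] x = x) (h : X → k) (x : X) :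
    ∑ i ∈ Finset.range l, h (σ^[i] (σ x)) = ∑ i ∈ Finset.range l, h (σ^[i] x) := by
  obtain ⟨m, rfl⟩ : ∃ m, l = m + 1 := ⟨l - 1, by omega⟩
  have key : ∀ i, h (σ^[i] (σ x)) = h (σ^[i + 1] x) := fun i => by
    rw [← Function.iterate_succ_apply]
  calc ∑ i ∈ Finset.range (m + 1), h (σ^[i] (σ x))
      = ∑ i ∈ Finset.range (m + 1), h (σ^[i + 1] x) := Finset.sum_congr rfl fun i _ => key i
    _ = (∑ i ∈ Finset.range m, h (σ^[i + 1] x)) + h (σ^[m + 1] x) :=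
        Finset.sum_range_succ _ m
    _ = (∑ i ∈ Finset.range m, h (σ^[i + 1] x)) + h x := by rw [hσl x]
    _ = ∑ i ∈ Finset.range (m + 1), h (σ^[i] x) :=
        (Finset.sum_range_succ' (fun i => h (σ^[i] x)) m).symm

lemma orbit_sum_shift_iter {X k : Type*} [AddCommMonoid k] (σ : X → X) {l : ℕ} (hl0 : 0 < l)
    (hσl : ∀ x, σ^[l] x = x) (h : X → k) (n : ℕ) (x : X) :
    ∑ i ∈ Finset.range l, h (σ^[i] (σ^[n] x)) = ∑ i ∈ Finset.range l, h (σ^[i] x) := by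
  induction n generalizing x with
  | zero => rfl
  | succ n ih =>
    calc ∑ i ∈ Finset.range l, h (σ^[i] (σ^[n + 1] x))
        = ∑ i ∈ Finset.range l, h (σ^[i] (σ^[n] (σ x))) := by
          rw [Function.iterate_succ_apply]
      _ = ∑ i ∈ Finset.range l, h (σ^[i] (σ x)) := ih (σ x)
      _ = _ := orbit_sum_shift σ hl0 hσl h x

lemma aux_list {X k : Type*} [TopologicalSpace X] [T2Space X] [CommRing k]
    (σ : X → X) (hσ : Continuous σ) {l : ℕ} (hl0 : 0 < l)
    (hσl : ∀ x, σ^[l] x = x)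
    (L : List (Set X))
    (hL : ∀ U ∈ L, IsClopen U ∧ IsCompact U ∧
      ∀ x : X, ∀ i < l, ∀ j < l, σ^[i] x ∈ U → σ^[j] x ∈ U → i = j) :
    ∃ h : X → k, IsLocallyConstant h ∧ HasCompactSupport h ∧
      (∀ x, ∑ i ∈ Finset.range l, h (σ^[i] x) = 0 ∨ ∑ i ∈ Finset.range l, h (σ^[i] x) = 1) ∧
      (∀ x, (∃ U ∈ L, x ∈ U) → ∑ i ∈ Finset.range l, h (σ^[i] x) = 1) := by
  classical
  induction L with
  | nil =>
    refine ⟨0, IsLocallyConstant.const 0, HasCompactSupport.zero, ?_, ?_⟩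
    · intro x; left; simp
    · rintro x ⟨U, hU, -⟩; simp at hU
  | cons U L ih =>
    obtain ⟨h', hlc', hcs', hdich', hcov'⟩ := ih (fun V hV => hL V (List.mem_cons_of_mem U hV))
    obtain ⟨hUclopen, hUcomp, hUuniq⟩ := hL U List.mem_cons_self
    set S' : X → k := fun x => ∑ i ∈ Finset.range l, h' (σ^[i] x) with hS'
    set χ : X → k := fun x => if x ∈ U then (1 : k) else 0 with hχ
    set h : X → k := fun x => h' x + χ x * (1 - S' x) with hh
    have hS'lc : IsLocallyConstant S' :=
      isLocallyConstant_finsetSum _ _ fun i _ => hlc'.comp_continuous (hσ.iterate i)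
    have hχlc : IsLocallyConstant χ := isLocallyConstant_indicator hUclopen
    have hlc : IsLocallyConstant h :=
      hlc'.add (hχlc.mul ((IsLocallyConstant.const 1).sub hS'lc))
    have hcs : HasCompactSupport h := by
      apply HasCompactSupport.intro' (hcs'.union hUcomp)
        ((isClosed_tsupport h').union hUclopen.1)
      intro x hx
      simp only [Set.mem_union, not_or] at hx
      have h1 : h' x = 0 := image_eq_zero_of_notMem_tsupport hx.1
      have h2 : χ x = 0 := by simp [hχ, hx.2]
      simp [hh, h1, h2]
    have hcval : ∀ x : X, ∑ i ∈ Finset.range l, χ (σ^[i] x)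
        = (((Finset.range l).filter fun i => σ^[i] x ∈ U).card : k) := by
      intro x; simp [hχ]
    have hcardle : ∀ x : X, ((Finset.range l).filter fun i => σ^[i] x ∈ U).card ≤ 1 := by
      intro x
      apply Finset.card_le_one.2
      intro i hi j hj
      simp only [Finset.mem_filter, Finset.mem_range] at hi hj
      exact hUuniq x i hi.1 j hj.1 hi.2 hj.2
    have hc : ∀ x : X, ∑ i ∈ Finset.range l, χ (σ^[i] x) = 0 ∨
        ∑ i ∈ Finset.range l, χ (σ^[i] x) = 1 := by
      intro x
      rw [hcval x]
      rcases Nat.le_one_iff_eq_zero_or_eq_one.1 (hcardle x) with hcc | hcc <;> rw [hcc]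
      · left; simp
      · right; simp
    have hsum : ∀ x, ∑ i ∈ Finset.range l, h (σ^[i] x)
        = S' x + (∑ i ∈ Finset.range l, χ (σ^[i] x)) * (1 - S' x) := by
      intro x
      simp only [hh]
      rw [Finset.sum_add_distrib, Finset.sum_mul]
      congr 1
      apply Finset.sum_congr rfl
      intro i _
      congr 2
      exact orbit_sum_shift_iter σ hl0 hσl h' i x
    refine ⟨h, hlc, hcs, ?_, ?_⟩
    · intro x
      rw [hsum x]
      have hd := hdich' x
      rw [show (∑ i ∈ Finset.range l, h' (σ^[i] x)) = S' x from rfl] at hd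
      rcases hd with hd | hd <;> rcases hc x with hcx | hcx <;>
        [left; right; right; right] <;> rw [hd, hcx] <;> ring
    · rintro x ⟨V, hV, hxV⟩
      rw [hsum x]
      rcases List.mem_cons.1 hV with rfl | hVL
      · have hcard1 : ((Finset.range l).filter fun i => σ^[i] x ∈ V).card = 1 := by
          refine le_antisymm (hcardle x) (Finset.card_pos.2 ⟨0, ?_⟩)
          exact Finset.mem_filter.2 ⟨Finset.mem_range.2 hl0, by simpa using hxV⟩
        have hcx : ∑ i ∈ Finset.range l, χ (σ^[i] x) = 1 := by
          rw [hcval x, hcard1]; norm_num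
        have hd := hdich' x
        rw [show (∑ i ∈ Finset.range l, h' (σ^[i] x)) = S' x from rfl] at hd
        rcases hd with hd | hd <;> rw [hd, hcx] <;> ring
      · have h1 : S' x = 1 := hcov' x ⟨V, hVL, hxV⟩
        rw [h1]; ring

/-- Let `γ` be a homeomorphism, of order dividing the prime `l`, of a locally compact,
Hausdorff, totally disconnected, second countable space `X`, acting freely
(`γ x ≠ x` for all `x`), and let `k` be a field of characteristic `l`. Then both Tate
cohomology groups of the `γ`-action on `C_c^∞(X, k)` vanish: every `γ`-invariant
`f ∈ C_c^∞(X, k)` is of the form `N(g) = ∑_{i=0}^{l-1} γ^i · g`, and every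
`f ∈ C_c^∞(X, k)` with `N(f) = 0` is of the form `g - γ·g`
(where `(γ · g)(x) = g(γ⁻¹ x)`). -/
theorem tate_cohomology_vanishes_of_free
    (l : ℕ) (hl : l.Prime)
    (X : Type*) [TopologicalSpace X] [LocallyCompactSpace X] [T2Space X]
    [TotallyDisconnectedSpace X] [SecondCountableTopology X]
    (γ : X ≃ₜ X) (hγl : ∀ x, (⇑γ)^[l] x = x)
    (hfree : ∀ x : X, γ x ≠ x)
    (k : Type*) [Field k] [CharP k l] :
    (∀ f : X → k, IsLocallyConstant f → HasCompactSupport f →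
      (∀ x, f (γ x) = f x) →
      ∃ g : X → k, IsLocallyConstant g ∧ HasCompactSupport g ∧
        ∀ x, f x = ∑ i ∈ Finset.range l, g ((⇑γ.symm)^[i] x)) ∧
    (∀ f : X → k, IsLocallyConstant f → HasCompactSupport f →
      (∀ x, ∑ i ∈ Finset.range l, f ((⇑γ.symm)^[i] x) = 0) →
      ∃ g : X → k, IsLocallyConstant g ∧ HasCompactSupport g ∧
        ∀ x, f x = g x - g (γ.symm x)) := by
  classical
  have hl0 : 0 < l := hl.pos
  set σ : X → X := ⇑γ.symm with hσdef
  have hσcont : Continuous σ := γ.symm.continuous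
  have hγσ : ∀ n (x : X), (⇑γ)^[n] (σ^[n] x) = x := fun n =>
    Function.LeftInverse.iterate (fun x => γ.apply_symm_apply x) n
  have hσγ : ∀ n (x : X), σ^[n] ((⇑γ)^[n] x) = x := fun n =>
    Function.LeftInverse.iterate (fun x => γ.symm_apply_apply x) n
  have hσl : ∀ x : X, σ^[l] x = x := by
    intro x
    have h1 := hγl (σ^[l] x)
    rw [hγσ l x] at h1
    exact h1.symm
  -- freeness for intermediate iterates
  have hfree' : ∀ m, 0 < m → m < l → ∀ x : X, (⇑γ)^[m] x ≠ x := by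
    intro m hm hml x hfix
    have hcop : Nat.Coprime m l :=
      Nat.Coprime.symm ((Nat.Prime.coprime_iff_not_dvd hl).2 (Nat.not_dvd_of_pos_of_lt hm hml))
    obtain ⟨a, -, ha⟩ := Nat.exists_mul_mod_eq_one_of_coprime hcop hl.one_lt
    have h3 : ∀ q (y : X), (⇑γ)^[l * q] y = y := by
      intro q y
      rw [Function.iterate_mul]
      exact Function.iterate_fixed (hγl y) q
    have h1 : (⇑γ)^[m * a] x = x := by
      rw [Function.iterate_mul]
      exact Function.iterate_fixed hfix a
    have h2 : m * a = l * (m * a / l) + 1 := by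
      conv_lhs => rw [← Nat.div_add_mod (m * a) l]
      rw [ha]
    rw [h2, Function.iterate_add_apply, Function.iterate_one, h3] at h1
    exact hfree x h1
  -- uniqueness of orbit points in separated sets
  have huniq : ∀ (W : Set X), (∀ z : X, ∀ m, 0 < m → m < l → z ∈ W → (⇑γ)^[m] z ∉ W) →
      ∀ x : X, ∀ i < l, ∀ j < l, σ^[i] x ∈ W → σ^[j] x ∈ W → i = j := by
    intro W hW x i hi j hj hiW hjW
    by_contra hne
    -- wlog i < j
    rcases Nat.lt_or_ge i j with hij | hij
    · have hkey : (⇑γ)^[j - i] (σ^[j] x) = σ^[i] x := by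
        have : σ^[j] x = σ^[j - i] (σ^[i] x) := by
          rw [← Function.iterate_add_apply]
          congr 1
          omega
        rw [this, hγσ (j - i)]
      exact hW (σ^[j] x) (j - i) (by omega) (by omega) hjW (hkey ▸ hiW)
    · have hij' : j < i := by omega
      have hkey : (⇑γ)^[i - j] (σ^[i] x) = σ^[j] x := by
        have : σ^[i] x = σ^[i - j] (σ^[j] x) := by
          rw [← Function.iterate_add_apply]
          congr 1
          omega
        rw [this, hγσ (i - j)]
      exact hW (σ^[i] x) (i - j) (by omega) (by omega) hiW (hkey ▸ hjW)
  -- clopen compact neighborhoods separating orbits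
  have hU : ∀ x : X, ∃ V : Set X, IsClopen V ∧ IsCompact V ∧ x ∈ V ∧
      ∀ z : X, ∀ m, 0 < m → m < l → z ∈ V → (⇑γ)^[m] z ∉ V := by
    intro x
    have hCm : ∀ m : ℕ, ∃ C : Set X, IsClopen C ∧ IsCompact C ∧ x ∈ C ∧
        (0 < m → m < l → ∀ z ∈ C, (⇑γ)^[m] z ∉ C) := by
      intro m
      by_cases hm : 0 < m ∧ m < l
      · obtain ⟨A, B, hA, hB, hxA, hxB, hAB⟩ :=
          t2_separation (Ne.symm (hfree' m hm.1 hm.2 x))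
        have hopen : IsOpen (A ∩ (⇑γ)^[m] ⁻¹' B) :=
          hA.inter (hB.preimage (γ.continuous.iterate m))
        obtain ⟨C, hC1, hC2, hC3, hC4⟩ := exists_clopen_compact hopen ⟨hxA, hxB⟩
        refine ⟨C, hC1, hC2, hC3, fun _ _ z hz hzc => ?_⟩
        exact Set.disjoint_left.1 hAB (hC4 hzc).1 (hC4 hz).2
      · obtain ⟨C, hC1, hC2, hC3, hC4⟩ :=
          exists_clopen_compact (isOpen_univ : IsOpen (Set.univ : Set X)) (Set.mem_univ x)
        exact ⟨C, hC1, hC2, hC3, fun h1 h2 => absurd ⟨h1, h2⟩ hm⟩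
    choose C hC1 hC2 hC3 hC4 using hCm
    have hl2 : 2 ≤ l := hl.two_le
    refine ⟨⋂ m ∈ Finset.Ico 1 l, C m, ?_, ?_, ?_, ?_⟩
    · exact isClopen_biInter_finset fun m _ => hC1 m
    · apply (hC2 1).of_isClosed_subset (isClopen_biInter_finset fun m _ => hC1 m).1
      exact Set.biInter_subset_of_mem (Finset.mem_Ico.2 ⟨le_refl 1, hl2⟩)
    · exact Set.mem_iInter₂.2 fun m _ => hC3 m
    · intro z m hm hml hz hzc
      have h1 : z ∈ C m := Set.mem_iInter₂.1 hz m (Finset.mem_Ico.2 ⟨hm, hml⟩)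
      have h2 : (⇑γ)^[m] z ∈ C m := Set.mem_iInter₂.1 hzc m (Finset.mem_Ico.2 ⟨hm, hml⟩)
      exact hC4 m hm hml z h1 h2
  -- the key partition function
  have key : ∀ K : Set X, IsCompact K → ∃ h : X → k, IsLocallyConstant h ∧
      HasCompactSupport h ∧ ∀ x ∈ K, ∑ i ∈ Finset.range l, h (σ^[i] x) = 1 := by
    intro K hK
    choose V hV1 hV2 hV3 hV4 using hU
    obtain ⟨t, ht⟩ := hK.elim_finite_subcover V (fun x => (hV1 x).2)
      (fun y hy => Set.mem_iUnion.2 ⟨y, hV3 y⟩)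
    have hLprop : ∀ W ∈ t.toList.map V, IsClopen W ∧ IsCompact W ∧
        ∀ x : X, ∀ i < l, ∀ j < l, σ^[i] x ∈ W → σ^[j] x ∈ W → i = j := by
      intro W hW
      obtain ⟨y, _, rfl⟩ := List.mem_map.1 hW
      exact ⟨hV1 y, hV2 y, huniq (V y) (hV4 y)⟩
    obtain ⟨h, hlc, hcs, _, hcov⟩ :=
      aux_list (k := k) σ hσcont hl0 hσl (t.toList.map V) hLprop
    refine ⟨h, hlc, hcs, fun x hx => ?_⟩
    obtain ⟨y, hyt, hxy⟩ := Set.mem_iUnion₂.1 (ht hx)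
    exact hcov x ⟨V y, List.mem_map_of_mem (f := V) (Finset.mem_toList.2 hyt), hxy⟩
  constructor
  -- Part 1
  · intro f hflc hfcs hinv
    have hinvσ : ∀ n (x : X), f (σ^[n] x) = f x := by
      intro n
      induction n with
      | zero => intro x; rfl
      | succ n ih =>
        intro x
        rw [Function.iterate_succ_apply', ← hinv (σ (σ^[n] x)), γ.apply_symm_apply, ih x]
    obtain ⟨h, hlc, hcs, hpart⟩ := key (tsupport f) hfcs.isCompact
    refine ⟨fun x => h x * f x, hlc.mul hflc, ?_, ?_⟩
    · exact hcs.mul_right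
    · intro x
      have hsum : ∑ i ∈ Finset.range l, h (σ^[i] x) * f (σ^[i] x)
          = (∑ i ∈ Finset.range l, h (σ^[i] x)) * f x := by
        rw [Finset.sum_mul]
        exact Finset.sum_congr rfl fun i _ => by rw [hinvσ i x]
      show f x = ∑ i ∈ Finset.range l, h (σ^[i] x) * f (σ^[i] x)
      rw [hsum]
      by_cases hfx : f x = 0
      · rw [hfx, mul_zero]
      · rw [hpart x (subset_tsupport f hfx), one_mul]
  -- Part 2
  · intro f hflc hfcs hNf
    obtain ⟨h, hlc, hcs, hpart⟩ := key (tsupport f) hfcs.isCompact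
    set g : X → k := fun x => ∑ j ∈ Finset.range l,
      h (σ^[j] x) * ∑ t ∈ Finset.range (j + 1), f (σ^[t] x) with hg
    have hglc : IsLocallyConstant g := by
      apply isLocallyConstant_finsetSum
      intro j _
      exact (hlc.comp_continuous (hσcont.iterate j)).mul
        (isLocallyConstant_finsetSum _ _ fun t _ => hflc.comp_continuous (hσcont.iterate t))
    have hgcs : HasCompactSupport g := by
      apply HasCompactSupport.intro'
        ((Finset.range l).isCompact_biUnion fun j _ =>
          (hcs.isCompact.image ((γ.continuous).iterate j)))
        (Set.Finite.isClosed_biUnion (Finset.range l).finite_toSet fun j _ =>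
          (hcs.isCompact.image ((γ.continuous).iterate j)).isClosed)
      intro x hx
      have hterm : ∀ j ∈ Finset.range l, h (σ^[j] x) = 0 := by
        intro j hj
        by_contra hne
        apply hx
        refine Set.mem_biUnion hj ⟨σ^[j] x, subset_tsupport h hne, hγσ j x⟩
      simp only [hg]
      exact Finset.sum_eq_zero fun j hj => by rw [hterm j hj, zero_mul]
    refine ⟨g, hglc, hgcs, ?_⟩
    intro x
    set T : ℕ → k := fun j => h (σ^[j] x) * ∑ t ∈ Finset.range (j + 1), f (σ^[t] x) with hT
    have hgx : g x = ∑ j ∈ Finset.range l, T j := rfl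
    have hgσx : g (γ.symm x) = (∑ j ∈ Finset.range l, T (j + 1))
        - f x * ∑ j ∈ Finset.range l, h (σ^[j] x) := by
      have hterm : ∀ j, h (σ^[j] (σ x)) * ∑ t ∈ Finset.range (j + 1), f (σ^[t] (σ x))
          = T (j + 1) - h (σ^[j + 1] x) * f x := by
        intro j
        have e1 : ∀ t, σ^[t] (σ x) = σ^[t + 1] x := fun t =>
          (Function.iterate_succ_apply σ t x).symm
        have e2 : ∑ t ∈ Finset.range (j + 1), f (σ^[t + 1] x)
            = (∑ t ∈ Finset.range (j + 2), f (σ^[t] x)) - f x := by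
          have := Finset.sum_range_succ' (fun t => f (σ^[t] x)) (j + 1)
          rw [this]
          simp
        simp only [e1, e2, hT]
        ring
      calc g (γ.symm x)
          = ∑ j ∈ Finset.range l, (T (j + 1) - h (σ^[j + 1] x) * f x) := by
            rw [hg]
            exact Finset.sum_congr rfl fun j _ => hterm j
        _ = (∑ j ∈ Finset.range l, T (j + 1)) - ∑ j ∈ Finset.range l, h (σ^[j + 1] x) * f x :=
            Finset.sum_sub_distrib _ _
        _ = (∑ j ∈ Finset.range l, T (j + 1)) - f x * ∑ j ∈ Finset.range l, h (σ^[j] x) := by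
            congr 1
            calc ∑ j ∈ Finset.range l, h (σ^[j + 1] x) * f x
                = (∑ j ∈ Finset.range l, h (σ^[j] (σ x))) * f x := by
                  rw [Finset.sum_mul]
                  exact Finset.sum_congr rfl fun j _ => by
                    rw [Function.iterate_succ_apply]
              _ = (∑ j ∈ Finset.range l, h (σ^[j] x)) * f x := by
                  rw [orbit_sum_shift σ hl0 hσl h x]
              _ = f x * ∑ j ∈ Finset.range l, h (σ^[j] x) := mul_comm _ _
    have htel : (∑ j ∈ Finset.range l, T j) - ∑ j ∈ Finset.range l, T (j + 1) = T 0 - T l := by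
      rw [← Finset.sum_sub_distrib]
      exact Finset.sum_range_sub' T l
    have hT0 : T 0 = h x * f x := by
      simp [hT]
    have hTl : T l = h x * f x := by
      have : ∑ t ∈ Finset.range (l + 1), f (σ^[t] x) = f x := by
        rw [Finset.sum_range_succ, hNf x, hσl x, zero_add]
      simp only [hT, this, hσl x]
    have hfinal : g x - g (γ.symm x) = f x * ∑ j ∈ Finset.range l, h (σ^[j] x) := by
      rw [hgx, hgσx]
      have : (∑ j ∈ Finset.range l, T j) - ((∑ j ∈ Finset.range l, T (j + 1))
          - f x * ∑ j ∈ Finset.range l, h (σ^[j] x))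
          = ((∑ j ∈ Finset.range l, T j) - ∑ j ∈ Finset.range l, T (j + 1))
            + f x * ∑ j ∈ Finset.range l, h (σ^[j] x) := by ring
      rw [this, htel, hT0, hTl]
      ring
    rw [hfinal]
    by_cases hfx : f x = 0
    · rw [hfx, zero_mul]
    · rw [hpart x (subset_tsupport f hfx), mul_one]
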